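/- In the uniform price (first-rejected-bid) K-item auction, the realized utility decomposes according to which bid sets the price: u(b,β) = Σ_{i=1}^K 1[β_{K-i} > b_{i+1} ≥ β_{K-i+1}]·(Σ_{l=1}^i v_l − i·b_{i+1}) + Σ_{i=1}^K 1[b_i ≥ β_{K-i+1} > b_{i+1}]·(Σ_{l=1}^i v_l − i·β_{K-i+1}), where b_{K+1} := 0 and β_0 := +∞ conventionally, and these events are pairwise disjoint with exactly one occurring. -/

import Mathlib

open scoped Classical

/-- Allocation in the K-item standard auction. -/
noncomputable def alloc (K : ℕ) (b β : ℕ → ℝ) : ℕ :=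
  Nat.findGreatest (fun k => ∀ j, 1 ≤ j → j ≤ k → β (K + 1 - j) ≤ b j) K

lemma fg_irrel {P : ℕ → Prop} (i1 i2 : DecidablePred P) (n : ℕ) :
    @Nat.findGreatest P i1 n = @Nat.findGreatest P i2 n := by
  congr!

lemma alloc_iff (K : ℕ) (b β : ℕ → ℝ) (m : ℕ) :
    alloc K b β = m ↔ m ≤ K ∧ (m ≠ 0 → ∀ j, 1 ≤ j → j ≤ m → β (K + 1 - j) ≤ b j)
      ∧ ∀ ⦃n⦄, m < n → n ≤ K → ¬ (∀ j, 1 ≤ j → j ≤ n → β (K + 1 - j) ≤ b j) := by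
  unfold alloc
  rw [fg_irrel (P := fun k => ∀ j, 1 ≤ j → j ≤ k → β (K + 1 - j) ≤ b j)
      (fun _ => Classical.propDecidable _) (fun a => Nat.decidableLoHiLe 1 a fun j => β (K + 1 - j) ≤ b j)]
  exact Nat.findGreatest_eq_iff

lemma alloc_le (K : ℕ) (b β : ℕ → ℝ) : alloc K b β ≤ K :=
  ((alloc_iff K b β _).mp rfl).1

lemma allocP (K : ℕ) (b β : ℕ → ℝ) :
    ∀ j, 1 ≤ j → j ≤ alloc K b β → β (K + 1 - j) ≤ b j := by
  intro j hj1 hj2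
  exact ((alloc_iff K b β _).mp rfl).2.1 (by omega) j hj1 hj2

lemma alloc_eq (K : ℕ) (b β : ℕ → ℝ)
    (hb : ∀ i j, 1 ≤ i → i ≤ j → j ≤ K → b j ≤ b i)
    (hβ : ∀ i j, 1 ≤ i → i ≤ j → j ≤ K → β j ≤ β i)
    (i : ℕ) (h1 : 1 ≤ i) (hiK : i ≤ K)
    (hPi : β (K - i + 1) ≤ b i)
    (hfail : i < K → b (i + 1) < β (K - i)) :
    alloc K b β = i := by
  have hP : ∀ j, 1 ≤ j → j ≤ i → β (K + 1 - j) ≤ b j := by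
    intro j hj1 hji
    have h1' : β (K + 1 - j) ≤ β (K - i + 1) := by
      rcases eq_or_lt_of_le hji with rfl | hlt
      · have : K + 1 - j = K - j + 1 := by omega
        rw [this]
      · exact hβ (K - i + 1) (K + 1 - j) (by omega) (by omega) (by omega)
    have h2' : b i ≤ b j := hb j i hj1 hji hiK
    linarith
  have hspec := (alloc_iff K b β _).mp rfl
  have hle : i ≤ alloc K b β := by
    by_contra h
    push_neg at h
    exact hspec.2.2 h hiK hP
  have hge : alloc K b β ≤ i := by
    by_contra h
    push_neg at h
    have hiK' : i < K := lt_of_lt_of_le h (alloc_le K b β)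
    have := allocP K b β (i + 1) (by omega) h
    have heq : K + 1 - (i + 1) = K - i := by omega
    rw [heq] at this
    exact absurd this (not_le.mpr (hfail hiK'))
  omega

/-- Uniform price: the (K+1)-th highest bid overall, i.e. `max (b (x+1)) (β (K-x+1))`. -/
noncomputable def price (K : ℕ) (b β : ℕ → ℝ) : ℝ :=
  max (b (alloc K b β + 1)) (β (K - alloc K b β + 1))

/-- Uniform-price utility: `∑_{l=1}^{x} (v_l − p)`. -/
noncomputable def util (K : ℕ) (v b β : ℕ → ℝ) : ℝ :=
  ∑ l ∈ Finset.Icc 1 (alloc K b β), (v l - price K b β)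

/-- Event: the price is set by the bidder's own bid `b (i+1)` and `x = i`
(with the convention `β 0 = +∞`, encoded by the disjunct `i = K`). -/
def eventA (K : ℕ) (b β : ℕ → ℝ) (i : ℕ) : Prop :=
  (i = K ∨ b (i + 1) < β (K - i)) ∧ β (K - i + 1) ≤ b (i + 1)

/-- Event: the price is set by the opposing bid `β (K-i+1)` and `x = i`. -/
def eventB (K : ℕ) (b β : ℕ → ℝ) (i : ℕ) : Prop :=
  β (K - i + 1) ≤ b i ∧ b (i + 1) < β (K - i + 1)

/-- Decomposition of the realized uniform-price utility according to which bid sets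
the price; the 2K events are pairwise disjoint and (whenever at least one item is
won) exactly one of them occurs. -/
theorem uniform_utility_decomposition (K : ℕ) (v b β : ℕ → ℝ)
    (hK : 1 ≤ K)
    (hv : ∀ i j, 1 ≤ i → i ≤ j → j ≤ K → v j ≤ v i)
    (hv01 : ∀ i, 1 ≤ i → i ≤ K → v i ∈ Set.Icc (0:ℝ) 1)
    (hb : ∀ i j, 1 ≤ i → i ≤ j → j ≤ K → b j ≤ b i)
    (hb01 : ∀ i, 1 ≤ i → i ≤ K → b i ∈ Set.Icc (0:ℝ) 1)
    (hβ : ∀ i j, 1 ≤ i → i ≤ j → j ≤ K → β j ≤ β i)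
    (hβ01 : ∀ i, 1 ≤ i → i ≤ K → β i ∈ Set.Icc (0:ℝ) 1)
    (hbK1 : b (K + 1) = 0) :
    (util K v b β
        = (∑ i ∈ Finset.Icc 1 K,
            if eventA K b β i then (∑ l ∈ Finset.Icc 1 i, v l) - (i : ℝ) * b (i + 1) else 0)
          + ∑ i ∈ Finset.Icc 1 K,
              if eventB K b β i then (∑ l ∈ Finset.Icc 1 i, v l) - (i : ℝ) * β (K - i + 1) else 0)
    ∧ (∀ i ∈ Finset.Icc 1 K, ∀ j ∈ Finset.Icc 1 K,
        (eventA K b β i → eventA K b β j → i = j)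
        ∧ (eventB K b β i → eventB K b β j → i = j)
        ∧ (eventA K b β i → ¬ eventB K b β j))
    ∧ (1 ≤ alloc K b β → ∃ i ∈ Finset.Icc 1 K, eventA K b β i ∨ eventB K b β i) := by
  set x := alloc K b β with hxdef
  have hxK : x ≤ K := alloc_le K b β
  -- events pin down the allocation
  have hA : ∀ i, 1 ≤ i → i ≤ K → eventA K b β i → x = i := by
    rintro i h1 h2 ⟨hA1, hA2⟩
    apply alloc_eq K b β hb hβ i h1 h2
    · have hbi : b (i + 1) ≤ b i := by
        rcases eq_or_lt_of_le h2 with rfl | h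
        · rw [hbK1]; exact (hb01 i h1 le_rfl).1
        · exact hb i (i + 1) h1 (by omega) (by omega)
      linarith
    · intro hlt
      rcases hA1 with rfl | h
      · omega
      · exact h
  have hB : ∀ i, 1 ≤ i → i ≤ K → eventB K b β i → x = i := by
    rintro i h1 h2 ⟨hB1, hB2⟩
    apply alloc_eq K b β hb hβ i h1 h2 hB1
    intro hlt
    have : β (K - i + 1) ≤ β (K - i) :=
      hβ (K - i) (K - i + 1) (by omega) (by omega) (by omega)
    linarith
  -- coverage
  have hcov : 1 ≤ x → eventA K b β x ∨ eventB K b β x := by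
    intro hx
    have hbx : β (K - x + 1) ≤ b x := by
      have := allocP K b β x hx le_rfl
      have heq : K + 1 - x = K - x + 1 := by omega
      rwa [heq] at this
    rcases le_or_gt (β (K - x + 1)) (b (x + 1)) with hle | hlt
    · left
      refine ⟨?_, hle⟩
      rcases eq_or_lt_of_le hxK with heq | hxK'
      · exact Or.inl heq
      · right
        have hspec := (alloc_iff K b β x).mp rfl
        have hnot := hspec.2.2 (n := x + 1) (by omega) (by omega)
        push_neg at hnot
        obtain ⟨j, hj1, hj2, hj3⟩ := hnot
        have hj : j = x + 1 := by
          by_contra hne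
          exact absurd (allocP K b β j hj1 (by omega)) (not_le.mpr hj3)
        subst hj
        have heq : K + 1 - (x + 1) = K - x := by omega
        rw [heq] at hj3
        linarith
    · exact Or.inr ⟨hbx, hlt⟩
  refine ⟨?_, ?_, ?_⟩
  · -- main equality
    rcases Nat.eq_zero_or_pos x with hx0 | hx1
    · have e1 : (∑ i ∈ Finset.Icc 1 K,
          if eventA K b β i then (∑ l ∈ Finset.Icc 1 i, v l) - (i : ℝ) * b (i + 1) else 0) = 0 := by
        apply Finset.sum_eq_zero
        intro i hi
        simp only [Finset.mem_Icc] at hi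
        rw [if_neg]
        intro h
        have := hA i hi.1 hi.2 h
        omega
      have e2 : (∑ i ∈ Finset.Icc 1 K,
          if eventB K b β i then (∑ l ∈ Finset.Icc 1 i, v l) - (i : ℝ) * β (K - i + 1) else 0) = 0 := by
        apply Finset.sum_eq_zero
        intro i hi
        simp only [Finset.mem_Icc] at hi
        rw [if_neg]
        intro h
        have := hB i hi.1 hi.2 h
        omega
      rw [e1, e2, util, ← hxdef, hx0]
      simp
    · have hxmem : x ∈ Finset.Icc 1 K := Finset.mem_Icc.mpr ⟨hx1, hxK⟩
      have e1 : (∑ i ∈ Finset.Icc 1 K,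
          if eventA K b β i then (∑ l ∈ Finset.Icc 1 i, v l) - (i : ℝ) * b (i + 1) else 0)
          = if eventA K b β x then (∑ l ∈ Finset.Icc 1 x, v l) - (x : ℝ) * b (x + 1) else 0 := by
        apply Finset.sum_eq_single_of_mem x hxmem
        intro i hi hne
        simp only [Finset.mem_Icc] at hi
        rw [if_neg]
        intro h
        exact hne ((hA i hi.1 hi.2 h).symm)
      have e2 : (∑ i ∈ Finset.Icc 1 K,
          if eventB K b β i then (∑ l ∈ Finset.Icc 1 i, v l) - (i : ℝ) * β (K - i + 1) else 0)
          = if eventB K b β x then (∑ l ∈ Finset.Icc 1 x, v l) - (x : ℝ) * β (K - x + 1) else 0 := by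
        apply Finset.sum_eq_single_of_mem x hxmem
        intro i hi hne
        simp only [Finset.mem_Icc] at hi
        rw [if_neg]
        intro h
        exact hne ((hB i hi.1 hi.2 h).symm)
      have hutil : util K v b β = (∑ l ∈ Finset.Icc 1 x, v l) - (x : ℝ) * price K b β := by
        rw [util, ← hxdef, Finset.sum_sub_distrib, Finset.sum_const, Nat.card_Icc]
        simp [mul_comm]
      rw [e1, e2, hutil]
      rcases hcov hx1 with hAx | hBx
      · have hnB : ¬ eventB K b β x := by
          rintro ⟨_, h2⟩
          exact absurd hAx.2 (not_le.mpr h2)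
        have hprice : price K b β = b (x + 1) := by
          rw [price, ← hxdef]
          exact max_eq_left hAx.2
        rw [if_pos hAx, if_neg hnB, hprice]
        ring
      · have hnA : ¬ eventA K b β x := by
          rintro ⟨_, h2⟩
          exact absurd h2 (not_le.mpr hBx.2)
        have hprice : price K b β = β (K - x + 1) := by
          rw [price, ← hxdef]
          exact max_eq_right (le_of_lt hBx.2)
        rw [if_neg hnA, if_pos hBx, hprice]
        ring
  · intro i hi j hj
    simp only [Finset.mem_Icc] at hi hj
    refine ⟨?_, ?_, ?_⟩
    · intro h1 h2
      have := hA i hi.1 hi.2 h1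
      have := hA j hj.1 hj.2 h2
      omega
    · intro h1 h2
      have := hB i hi.1 hi.2 h1
      have := hB j hj.1 hj.2 h2
      omega
    · intro h1 h2
      have e1 := hA i hi.1 hi.2 h1
      have e2 := hB j hj.1 hj.2 h2
      have : i = j := by omega
      subst this
      exact absurd h1.2 (not_le.mpr h2.2)
  · intro hx
    exact ⟨x, Finset.mem_Icc.mpr ⟨hx, hxK⟩, hcov hx⟩
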